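/- The expectation of Y equals (1/3)·(p₁ + p₂ + p₃), and the variance of Y equals (a²/27)·Σ_{k=1}^{3} ( (x - p_k)² + p_k²/3 ). -/

import Mathlib

open MeasureTheory ProbabilityTheory
open scoped ENNReal
open intervalIntegral

/-- The uniform distribution on the interval `[s, t]`: Lebesgue measure restricted to
`[s, t]`, scaled by `(t - s)⁻¹`. -/
noncomputable def uniformMeasure (s t : ℝ) : Measure ℝ :=
  (ENNReal.ofReal (t - s))⁻¹ • volume.restrict (Set.Icc s t)

lemma uniform_integral (s t : ℝ) (hst : s < t) (g : ℝ → ℝ) :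
    ∫ y, g y ∂(uniformMeasure s t) = (t - s)⁻¹ * ∫ y in s..t, g y := by
  rw [uniformMeasure, MeasureTheory.integral_smul_measure, ENNReal.toReal_inv,
    ENNReal.toReal_ofReal (by linarith), intervalIntegral.integral_of_le hst.le,
    ← MeasureTheory.integral_Icc_eq_integral_Ioc, smul_eq_mul]

lemma uniform_ae {Ω : Type*} [MeasurableSpace Ω] {P : Measure Ω} {X : Ω → ℝ}
    (hX : Measurable X) {s t : ℝ} (hlaw : Measure.map X P = uniformMeasure s t) :
    ∀ᵐ ω ∂P, X ω ∈ Set.Icc s t := by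
  have h0 : (Measure.map X P) (Set.Icc s t)ᶜ = 0 := by
    rw [hlaw, uniformMeasure]
    simp [Measure.restrict_apply (measurableSet_Icc.compl)]
  rw [Measure.map_apply hX measurableSet_Icc.compl] at h0
  refine measure_mono_null ?_ h0; intro ω hω; simpa [Set.mem_Icc] using hω

/-- Inference 2(2): for the grey wolf update
`Y = (1/3) Σₖ (pₖ + Aₖ · |Cₖ · pₖ - x|)` with `A₁, A₂, A₃, C₁, C₂, C₃` mutually
independent, `Aₖ ~ U[-a, a]`, `Cₖ ~ U[0, 2]`, the expectation of `Y` is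
`(1/3) Σₖ pₖ` and the variance of `Y` is `(a²/27) Σₖ ((x - pₖ)² + pₖ²/3)`. -/
theorem gwo_new_solution_mean_variance
    {Ω : Type*} [MeasurableSpace Ω] (P : Measure Ω) [IsProbabilityMeasure P]
    (a x : ℝ) (p : Fin 3 → ℝ) (ha : 0 < a)
    (A C : Fin 3 → Ω → ℝ) (hA : ∀ k, Measurable (A k)) (hC : ∀ k, Measurable (C k))
    (hInd : iIndepFun (Sum.elim A C) P)
    (hAlaw : ∀ k, Measure.map (A k) P = uniformMeasure (-a) a)
    (hClaw : ∀ k, Measure.map (C k) P = uniformMeasure 0 2) :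
    (∫ ω, (1 / 3 : ℝ) * ∑ k, (p k + A k ω * |C k ω * p k - x|) ∂P
        = (1 / 3) * ∑ k, p k) ∧
    variance (fun ω => (1 / 3 : ℝ) * ∑ k, (p k + A k ω * |C k ω * p k - x|)) P
        = a ^ 2 / 27 * ∑ k, ((x - p k) ^ 2 + (p k) ^ 2 / 3) := by
  -- abbreviations
  set f : Fin 3 → Ω → ℝ := fun k ω => A k ω * |C k ω * p k - x| with hf
  have hmeasG : ∀ k, Measurable (fun y : ℝ => |y * p k - x|) := fun k =>
    ((measurable_id.mul_const _).sub_const _).abs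
  have hmeasF : ∀ k, Measurable (f k) := fun k => (hA k).mul ((hmeasG k).comp (hC k))
  -- a.e. bounds
  have hbA : ∀ k, ∀ᵐ ω ∂P, |A k ω| ≤ a := by
    intro k
    filter_upwards [uniform_ae (hA k) (hAlaw k)] with ω hω
    rw [abs_le]; exact ⟨hω.1, hω.2⟩
  have hbC : ∀ k, ∀ᵐ ω ∂P, |C k ω| ≤ 2 := by
    intro k
    filter_upwards [uniform_ae (hC k) (hClaw k)] with ω hω
    rw [abs_le]; constructor <;> [linarith [hω.1]; exact hω.2]
  -- MemLp bounds for everything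
  have hMemA : ∀ k, MemLp (A k) 2 P := by
    intro k
    refine MemLp.of_bound (hA k).aestronglyMeasurable a ?_
    filter_upwards [hbA k] with ω hω using by simpa [Real.norm_eq_abs] using hω
  have hMemGC : ∀ k, MemLp (fun ω => |C k ω * p k - x|) 2 P := by
    intro k
    refine MemLp.of_bound ((hmeasG k).comp (hC k)).aestronglyMeasurable
      (2 * |p k| + |x|) ?_
    filter_upwards [hbC k] with ω hω
    rw [Real.norm_eq_abs, abs_abs]
    calc |C k ω * p k - x| ≤ |C k ω * p k| + |x| := abs_sub _ _
      _ ≤ 2 * |p k| + |x| := by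
          rw [abs_mul]
          have := abs_nonneg (p k)
          nlinarith
  have hbF : ∀ k, ∀ᵐ ω ∂P, |f k ω| ≤ a * (2 * |p k| + |x|) := by
    intro k
    filter_upwards [hbA k, hbC k] with ω h1 h2
    rw [hf, abs_mul, abs_abs]
    have hb : |C k ω * p k - x| ≤ 2 * |p k| + |x| := by
      calc |C k ω * p k - x| ≤ |C k ω * p k| + |x| := abs_sub _ _
        _ ≤ 2 * |p k| + |x| := by
            rw [abs_mul]; have := abs_nonneg (p k); nlinarith
    have := abs_nonneg (A k ω)
    have := abs_nonneg (C k ω * p k - x)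
    nlinarith
  have hMemF : ∀ k, MemLp (f k) 2 P := by
    intro k
    refine MemLp.of_bound (hmeasF k).aestronglyMeasurable (a * (2 * |p k| + |x|)) ?_
    filter_upwards [hbF k] with ω h using by simpa [Real.norm_eq_abs] using h
  have hIntF : ∀ k, Integrable (f k) P := fun k => (hMemF k).integrable one_le_two
  have hIntFF : ∀ i j, Integrable (fun ω => f i ω * f j ω) P := by
    intro i j
    refine Integrable.mono' (g := fun _ => (a * (2 * |p i| + |x|)) * (a * (2 * |p j| + |x|)))
      (integrable_const _) ((hmeasF i).mul (hmeasF j)).aestronglyMeasurable ?_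
    filter_upwards [hbF i, hbF j] with ω h1 h2
    rw [Real.norm_eq_abs, abs_mul]
    exact mul_le_mul h1 h2 (abs_nonneg _) (le_trans (abs_nonneg _) h1)
  -- independence
  have hmeasSum : ∀ s : Fin 3 ⊕ Fin 3, Measurable (Sum.elim A C s) := by
    rintro (k | k); exacts [hA k, hC k]
  have hIntA : ∀ k, Integrable (A k) P := fun k => (hMemA k).integrable one_le_two
  have hIntGC : ∀ k, Integrable (fun ω => |C k ω * p k - x|) P :=
    fun k => (hMemGC k).integrable one_le_two
  have hEA : ∀ k, ∫ ω, A k ω ∂P = 0 := by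
    intro k
    have h : ∫ ω, A k ω ∂P = ∫ y, y ∂(Measure.map (A k) P) :=
      (integral_map (hA k).aemeasurable measurable_id.aestronglyMeasurable).symm
    rw [h, hAlaw k, uniform_integral _ _ (by linarith) _, integral_id]
    ring
  have hEA2 : ∀ k, ∫ ω, (A k ω) ^ 2 ∂P = a ^ 2 / 3 := by
    intro k
    have h : ∫ ω, (A k ω) ^ 2 ∂P = ∫ y, y ^ 2 ∂(Measure.map (A k) P) :=
      (integral_map (hA k).aemeasurable
        (measurable_id.pow_const 2).aestronglyMeasurable).symm
    rw [h, hAlaw k, uniform_integral _ _ (by linarith) _, integral_pow]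
    field_simp
    ring
  have hEC2 : ∀ k, ∫ ω, (C k ω * p k - x) ^ 2 ∂P = (x - p k) ^ 2 + (p k) ^ 2 / 3 := by
    intro k
    have h : ∫ ω, (C k ω * p k - x) ^ 2 ∂P
        = ∫ y, (y * p k - x) ^ 2 ∂(Measure.map (C k) P) :=
      (integral_map (hC k).aemeasurable
        (((measurable_id.mul_const _).sub_const _).pow_const 2).aestronglyMeasurable).symm
    rw [h, hClaw k, uniform_integral _ _ (by norm_num) _]
    have hpoly : ∀ y : ℝ, (y * p k - x) ^ 2 = p k ^ 2 * y ^ 2 - 2 * p k * x * y + x ^ 2 := by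
      intro y; ring
    simp_rw [hpoly]
    rw [integral_add (((intervalIntegrable_pow 2).const_mul _).sub
          ((intervalIntegrable_id).const_mul _)) (intervalIntegrable_const),
      integral_sub ((intervalIntegrable_pow 2).const_mul _)
          ((intervalIntegrable_id).const_mul _),
      intervalIntegral.integral_const_mul, intervalIntegral.integral_const_mul, integral_pow, integral_id,
      intervalIntegral.integral_const]
    norm_num
    ring
  have hEf : ∀ k, ∫ ω, f k ω ∂P = 0 := by
    intro k
    have hIndAC : IndepFun (A k) (fun ω => |C k ω * p k - x|) P :=
      (hInd.indepFun (show (Sum.inl k : Fin 3 ⊕ Fin 3) ≠ Sum.inr k by simp)).comp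
        measurable_id (hmeasG k)
    have h := hIndAC.integral_mul_eq_mul_integral (hIntA k).aestronglyMeasurable (hIntGC k).aestronglyMeasurable
    rw [show (∫ ω, f k ω ∂P)
        = integral P ((A k) * fun ω => |C k ω * p k - x|) from rfl, h, hEA k, zero_mul]
  have hEf2 : ∀ k, ∫ ω, (f k ω) ^ 2 ∂P
      = a ^ 2 / 3 * ((x - p k) ^ 2 + (p k) ^ 2 / 3) := by
    intro k
    have hIndAC2 : IndepFun (fun ω => (A k ω) ^ 2) (fun ω => (C k ω * p k - x) ^ 2) P :=
      (hInd.indepFun (show (Sum.inl k : Fin 3 ⊕ Fin 3) ≠ Sum.inr k by simp)).comp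
        (measurable_id.pow_const 2) (((measurable_id.mul_const _).sub_const _).pow_const 2)
    have hIA2 : Integrable (fun ω => (A k ω) ^ 2) P := (hMemA k).integrable_sq
    have hIC2 : Integrable (fun ω => (C k ω * p k - x) ^ 2) P := by
      have := (hMemGC k).integrable_sq
      simpa [sq_abs] using this
    have h := hIndAC2.integral_mul_eq_mul_integral hIA2.aestronglyMeasurable hIC2.aestronglyMeasurable
    have heq : ∀ ω, (f k ω) ^ 2 = (A k ω) ^ 2 * (C k ω * p k - x) ^ 2 := by
      intro ω; rw [hf]; rw [mul_pow, sq_abs]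
    simp_rw [heq]
    rw [show (∫ ω, (A k ω) ^ 2 * (C k ω * p k - x) ^ 2 ∂P)
        = integral P ((fun ω => (A k ω) ^ 2) * fun ω => (C k ω * p k - x) ^ 2) from rfl,
      h, hEA2 k, hEC2 k]
  have hEff : ∀ i j : Fin 3, i ≠ j → ∫ ω, f i ω * f j ω ∂P = 0 := by
    intro i j hij
    have hφ : ∀ k : Fin 3, Measurable (fun q : ℝ × ℝ => q.1 * |q.2 * p k - x|) :=
      fun k => measurable_fst.mul (((measurable_snd.mul_const _).sub_const _).abs)
    have hIndFF : IndepFun (f i) (f j) P :=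
      (hInd.indepFun_prodMk_prodMk hmeasSum (Sum.inl i) (Sum.inr i) (Sum.inl j)
        (Sum.inr j) (by simp [hij]) (by simp) (by simp) (by simp [hij])).comp
        (hφ i) (hφ j)
    have h := hIndFF.integral_mul_eq_mul_integral (hIntF i).aestronglyMeasurable (hIntF j).aestronglyMeasurable
    rw [show (∫ ω, f i ω * f j ω ∂P) = integral P (f i * f j) from rfl, h,
      hEf i, zero_mul]
  have hmean : ∫ ω, (1 / 3 : ℝ) * ∑ k, (p k + A k ω * |C k ω * p k - x|) ∂P
      = (1 / 3) * ∑ k, p k := by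
    have h1 : ∫ ω, (1 / 3 : ℝ) * ∑ k, (p k + f k ω) ∂P
        = (1 / 3) * ∑ k, (p k + ∫ ω, f k ω ∂P) := by
      rw [MeasureTheory.integral_const_mul,
        integral_finset_sum (f := fun k ω => p k + f k ω) Finset.univ
          (fun k _ => by exact (integrable_const (p k)).add (hIntF k))]
      congr 1
      refine Finset.sum_congr rfl fun k _ => ?_
      rw [integral_add (integrable_const _) (hIntF k), MeasureTheory.integral_const]
      simp
    simp only [hEf, add_zero] at h1
    exact h1
  refine ⟨hmean, ?_⟩
  have hMemY : MemLp (fun ω => (1 / 3 : ℝ) * ∑ k, (p k + A k ω * |C k ω * p k - x|)) 2 P := by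
    have h := memLp_finset_sum (μ := P) (p := 2) Finset.univ
      (f := fun k ω => p k + f k ω) (fun k _ => (memLp_const (p k)).add (hMemF k))
    exact h.const_mul (1 / 3 : ℝ)
  rw [variance_eq_integral hMemY.aestronglyMeasurable.aemeasurable]
  have I2 : ∀ k, Integrable (fun ω => (f k ω) ^ 2) P := fun k => (hMemF k).integrable_sq
  have hrw : (fun ω => ((1 / 3 : ℝ) * ∑ k, (p k + A k ω * |C k ω * p k - x|)
        - ∫ ω, (1 / 3 : ℝ) * ∑ k, (p k + A k ω * |C k ω * p k - x|) ∂P) ^ 2)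
      = fun ω => (1/9 : ℝ) * (f 0 ω) ^ 2 + (1/9) * (f 1 ω) ^ 2 + (1/9) * (f 2 ω) ^ 2
          + (2/9) * (f 0 ω * f 1 ω) + (2/9) * (f 0 ω * f 2 ω) + (2/9) * (f 1 ω * f 2 ω) := by
    funext ω
    rw [hmean]
    simp only [Fin.sum_univ_three, hf]
    ring
  simp only [hrw]
  have Ia : Integrable (fun ω => (1/9 : ℝ) * (f 0 ω) ^ 2) P := (I2 0).const_mul _
  have Ib : Integrable (fun ω => (1/9 : ℝ) * (f 1 ω) ^ 2) P := (I2 1).const_mul _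
  have Ic : Integrable (fun ω => (1/9 : ℝ) * (f 2 ω) ^ 2) P := (I2 2).const_mul _
  have Id : Integrable (fun ω => (2/9 : ℝ) * (f 0 ω * f 1 ω)) P := (hIntFF 0 1).const_mul _
  have Ie : Integrable (fun ω => (2/9 : ℝ) * (f 0 ω * f 2 ω)) P := (hIntFF 0 2).const_mul _
  have If : Integrable (fun ω => (2/9 : ℝ) * (f 1 ω * f 2 ω)) P := (hIntFF 1 2).const_mul _
  have IL2 : Integrable (fun ω => (1/9 : ℝ) * (f 0 ω) ^ 2 + (1/9) * (f 1 ω) ^ 2) P :=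
    by exact Ia.add Ib
  have IL3 : Integrable (fun ω => (1/9 : ℝ) * (f 0 ω) ^ 2 + (1/9) * (f 1 ω) ^ 2
      + (1/9) * (f 2 ω) ^ 2) P := by exact IL2.add Ic
  have IL4 : Integrable (fun ω => (1/9 : ℝ) * (f 0 ω) ^ 2 + (1/9) * (f 1 ω) ^ 2
      + (1/9) * (f 2 ω) ^ 2 + (2/9) * (f 0 ω * f 1 ω)) P := by exact IL3.add Id
  have IL5 : Integrable (fun ω => (1/9 : ℝ) * (f 0 ω) ^ 2 + (1/9) * (f 1 ω) ^ 2
      + (1/9) * (f 2 ω) ^ 2 + (2/9) * (f 0 ω * f 1 ω) + (2/9) * (f 0 ω * f 2 ω)) P :=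
    by exact IL4.add Ie
  rw [integral_add IL5 If, integral_add IL4 Ie, integral_add IL3 Id,
    integral_add IL2 Ic, integral_add Ia Ib]
  simp only [MeasureTheory.integral_const_mul, hEf2, hEff 0 1 (by decide),
    hEff 0 2 (by decide), hEff 1 2 (by decide), Fin.sum_univ_three]
  ring
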